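/- Predicative embedding at the root: Let R be a TRS compatible with a POE* order ⊐ induced by precedence ≻, and let σ map variables to values. Then for every rule l → r ∈ R, Q(lσ) ▷_{|r|} Q(rσ), where Q is the predicative interpretation mapping a value to the empty sequence and a non-value f(s_1,...,s_k; s_{k+1},...,s_{k+l}) to the sequence [f^n(s_1,...,s_k)] ++ Q(s_{k+1}) ++ ... ++ Q(s_{k+l}), and |r| is the size of r. -/

import Mathlib

/-- Terms over signature `F` and variables `V`, with the argument positions of
each function symbol separated into normal (`nrm`) and safe (`saf`) ones. -/
inductive Tm (F V : Type) where
  | var : V → Tm F V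
  | app : F → List (Tm F V) → List (Tm F V) → Tm F V

namespace Tm

/-- Values: terms built from constructors (symbols in `C`) only; constructors
have only safe argument positions. -/
inductive IsVal {F V : Type} (C : Set F) : Tm F V → Prop where
  | app {f ss} : f ∈ C → (∀ t ∈ ss, IsVal C t) → IsVal C (Tm.app f [] ss)

/-- Constructor terms: terms built from constructors and variables only. -/
inductive IsConTm {F V : Type} (C : Set F) : Tm F V → Prop where
  | var (v : V) : IsConTm C (Tm.var v)
  | app {f ss} : f ∈ C → (∀ t ∈ ss, IsConTm C t) → IsConTm C (Tm.app f [] ss)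

/-- Application of a substitution to a term. -/
def subst {F V : Type} (σ : V → Tm F V) : Tm F V → Tm F V
  | Tm.var v => σ v
  | Tm.app f ns ss => Tm.app f (ns.attach.map fun t => subst σ t.1)
                               (ss.attach.map fun t => subst σ t.1)
  decreasing_by
    · have := List.sizeOf_lt_of_mem t.2; simp; omega
    · have := List.sizeOf_lt_of_mem t.2; simp; omega

/-- The size of a term: the number of symbols occurring in it. -/
def size {F V : Type} : Tm F V → ℕ
  | Tm.var _ => 1
  | Tm.app _ ns ss => 1 + ((ns.attach.map fun t => size t.1).sum
                            + (ss.attach.map fun t => size t.1).sum)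
  decreasing_by
    · have := List.sizeOf_lt_of_mem t.2; simp; omega
    · have := List.sizeOf_lt_of_mem t.2; simp; omega

/-- `SubEq s t` : `t` is a (not necessarily proper) subterm of `s`. -/
inductive SubEq {F V : Type} : Tm F V → Tm F V → Prop where
  | refl (t) : SubEq t t
  | nrm {f ns ss s t} : s ∈ ns → SubEq s t → SubEq (Tm.app f ns ss) t
  | saf {f ns ss s t} : s ∈ ss → SubEq s t → SubEq (Tm.app f ns ss) t

/-- `NSub s t` : `t` is a subterm of a normal argument of `s`
(the relation written `s ⊳ⁿ t`). -/
def NSub {F V : Type} (s t : Tm F V) : Prop :=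
  ∃ f ns ss, s = Tm.app f ns ss ∧ ∃ u ∈ ns, SubEq u t

/-- Call-by-value rewriting for a set of rules `R`: root steps instantiate a
rule with a substitution mapping variables to values, and rewriting is closed
under contexts. -/
inductive Rew {F V : Type} (C : Set F) (R : Set (Tm F V × Tm F V)) : Tm F V → Tm F V → Prop where
  | root {l r : Tm F V} (σ : V → Tm F V) :
      (l, r) ∈ R → (∀ v, IsVal C (σ v)) → Rew C R (subst σ l) (subst σ r)
  | ctxtN {s t f ns₁ ns₂ ss} : Rew C R s t →
      Rew C R (Tm.app f (ns₁ ++ s :: ns₂) ss) (Tm.app f (ns₁ ++ t :: ns₂) ss)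
  | ctxtS {s t f ns ss₁ ss₂} : Rew C R s t →
      Rew C R (Tm.app f ns (ss₁ ++ s :: ss₂)) (Tm.app f ns (ss₁ ++ t :: ss₂))

mutual
  /-- The POE* order `⊐` induced by a precedence `prec` and constructors `C`
  (Definition of `poe`); symbols not in `C` are the defined symbols. -/
  inductive Poe {F V : Type} (prec : F → F → Prop) (C : Set F) : Tm F V → Tm F V → Prop where
    /- clause (1), `sᵢ = t`: `t` is one of the (normal or safe) arguments -/
    | sub {f ns ss t} : t ∈ ns ++ ss → Poe prec C (Tm.app f ns ss) t
    /- clause (1), `sᵢ ⊐ t` for an argument `sᵢ` -/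
    | subtrans {f ns ss u t} : u ∈ ns ++ ss → Poe prec C u t → Poe prec C (Tm.app f ns ss) t
    /- clause (2): precedence descent; normal arguments of `t` are subterms of
       normal arguments of `s`, and `s ⊐` every safe argument of `t` -/
    | ia {f g : F} {ns ss tn ts} : f ∉ C → prec f g →
        (∀ t' ∈ tn, NSub (Tm.app f ns ss) t') →
        (∀ t' ∈ ts, Poe prec C (Tm.app f ns ss) t') →
        Poe prec C (Tm.app f ns ss) (Tm.app g tn ts)
    /- clause (3): same defined root symbol, product descent on normal
       arguments, `s ⊐` every safe argument of `t` -/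
    | tsc {f : F} {ns ss tn ts} : f ∉ C →
        PoeProd prec C ns tn →
        (∀ t' ∈ ts, Poe prec C (Tm.app f ns ss) t') →
        Poe prec C (Tm.app f ns ss) (Tm.app f tn ts)

  /-- Product extension of `⊐`: componentwise equal-or-smaller with at least
  one strict decrease. -/
  inductive PoeProd {F V : Type} (prec : F → F → Prop) (C : Set F) :
      List (Tm F V) → List (Tm F V) → Prop where
    | strict {a b as bs} : Poe prec C a b → PoeGE prec C as bs →
        PoeProd prec C (a :: as) (b :: bs)
    | cons_eq {a as bs} : PoeProd prec C as bs → PoeProd prec C (a :: as) (a :: bs)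
    | cons_lt {a b as bs} : Poe prec C a b → PoeProd prec C as bs →
        PoeProd prec C (a :: as) (b :: bs)

  /-- Componentwise equal-or-smaller (w.r.t. `⊐`) lists of equal length. -/
  inductive PoeGE {F V : Type} (prec : F → F → Prop) (C : Set F) :
      List (Tm F V) → List (Tm F V) → Prop where
    | nil : PoeGE prec C [] []
    | cons_eq {a as bs} : PoeGE prec C as bs → PoeGE prec C (a :: as) (a :: bs)
    | cons_lt {a b as bs} : Poe prec C a b → PoeGE prec C as bs →
        PoeGE prec C (a :: as) (b :: bs)
end

/-- `R` is compatible with the POE* order induced by `prec`, and is a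
constructor TRS: every left-hand side has a defined root symbol and its
arguments are constructor terms. -/
def PoeCompatible {F V : Type} (prec : F → F → Prop) (C : Set F)
    (R : Set (Tm F V × Tm F V)) : Prop :=
  ∀ p ∈ R, Poe prec C p.1 p.2 ∧
    ∃ f ns ss, p.1 = Tm.app f ns ss ∧ f ∉ C ∧ ∀ t ∈ ns ++ ss, IsConTm C t

/-- `TN`: the set of terms whose normal argument positions hold values. -/
inductive TN {F V : Type} (C : Set F) : Tm F V → Prop where
  | val {t} : IsVal C t → TN C t
  | app {f ns ss} : (∀ v ∈ ns, IsVal C v) → (∀ t ∈ ss, TN C t) →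
      TN C (Tm.app f ns ss)

end Tm

namespace Tm

/-- `SSub s t` : `t` is a strict subterm of `s`. -/
inductive SSub {F V : Type} : Tm F V → Tm F V → Prop where
  | nrm {f ns ss u t} : u ∈ ns → SubEq u t → SSub (Tm.app f ns ss) t
  | saf {f ns ss u t} : u ∈ ss → SubEq u t → SSub (Tm.app f ns ss) t

/-- Elements compared by the auxiliary order `▷_ℓ`: normalised terms (inl) or
sequences of normalised terms (inr).  The normalised term `fⁿ(s₁,…,s_k)` is
represented as `f` applied to normal arguments `s₁,…,s_k` and no safe
arguments; the lifted precedence `fⁿ ≻' gⁿ ⇔ f ≻ g` is then `prec` itself. -/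
abbrev TS (F V : Type) := Tm F V ⊕ List (Tm F V)

/-- Identification of a term with the singleton sequence. -/
def toL {F V : Type} : TS F V → List (Tm F V) := Sum.elim (fun t => [t]) id

mutual
  /-- The auxiliary order `▷_ℓ` on (normalised) terms and sequences, induced
  by a precedence `prec` and the width bound `ℓ`. -/
  inductive Poel {F V : Type} (prec : F → F → Prop) (ℓ : ℕ) : TS F V → TS F V → Prop where
    /- clause (1): precedence descent to strict subterms, width at most ℓ -/
    | ia {f g : F} {ss ts : List (Tm F V)} :
        prec f g → (∀ t ∈ ts, SSub (Tm.app f ss []) t) → ts.length ≤ ℓ →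
        Poel prec ℓ (Sum.inl (Tm.app f ss [])) (Sum.inl (Tm.app g ts []))
    /- clause (2): same symbol, product extension of the strict-subterm order -/
    | tsc {f : F} {ss ts : List (Tm F V)} :
        List.Forall₂ (fun s t => s = t ∨ SSub s t) ss ts →
        (∃ i, ∃ (h₁ : i < ss.length) (h₂ : i < ts.length), SSub ss[i] ts[i]) →
        Poel prec ℓ (Sum.inl (Tm.app f ss [])) (Sum.inl (Tm.app f ts []))
    /- clause (3): descent from a term to a sequence of at most ℓ smaller terms -/
    | ialst {f : F} {ss ts : List (Tm F V)} :
        (∀ t ∈ ts, Poel prec ℓ (Sum.inl (Tm.app f ss [])) (Sum.inl t)) → ts.length ≤ ℓ →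
        Poel prec ℓ (Sum.inl (Tm.app f ss [])) (Sum.inr ts)
    /- clause (4): sequences, splitting `ts = b₁ ++ ⋯ ++ b_k` with
       `⟨s₁,…,s_k⟩` greater than `⟨b₁,…,b_k⟩` in the product extension of `▷_ℓ` -/
    | ms {ss ts : List (Tm F V)} (bs : List (TS F V)) :
        ts = (bs.map toL).flatten →
        PoelProd prec ℓ (ss.map Sum.inl) bs →
        Poel prec ℓ (Sum.inr ss) (Sum.inr ts)

  /-- Product extension of `▷_ℓ`: componentwise equal-or-smaller with at
  least one strict decrease. -/
  inductive PoelProd {F V : Type} (prec : F → F → Prop) (ℓ : ℕ) :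
      List (TS F V) → List (TS F V) → Prop where
    | strict {a b as bs} : Poel prec ℓ a b → PoelGE prec ℓ as bs →
        PoelProd prec ℓ (a :: as) (b :: bs)
    | cons_eq {a as bs} : PoelProd prec ℓ as bs → PoelProd prec ℓ (a :: as) (a :: bs)
    | cons_lt {a b as bs} : Poel prec ℓ a b → PoelProd prec ℓ as bs →
        PoelProd prec ℓ (a :: as) (b :: bs)

  /-- Componentwise equal-or-smaller (w.r.t. `▷_ℓ`) lists of equal length. -/
  inductive PoelGE {F V : Type} (prec : F → F → Prop) (ℓ : ℕ) :
      List (TS F V) → List (TS F V) → Prop where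
    | nil : PoelGE prec ℓ [] []
    | cons_eq {a as bs} : PoelGE prec ℓ as bs → PoelGE prec ℓ (a :: as) (a :: bs)
    | cons_lt {a b as bs} : Poel prec ℓ a b → PoelGE prec ℓ as bs →
        PoelGE prec ℓ (a :: as) (b :: bs)
end

mutual
  /-- The predicative interpretation `Q` (as a functional relation):
  a value is mapped to the empty sequence, and a non-value
  `f(s₁,…,s_k; s_{k+1},…,s_{k+l})` to `[fⁿ(s₁,…,s_k)] ++ Q(s_{k+1}) ++ ⋯ ++ Q(s_{k+l})`. -/
  inductive QRel {F V : Type} (C : Set F) : Tm F V → List (Tm F V) → Prop where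
    | val {t} : IsVal C t → QRel C t []
    | app {f ns ss qs} : ¬ IsVal C (Tm.app f ns ss) → QList C ss qs →
        QRel C (Tm.app f ns ss) (Tm.app f ns [] :: qs.flatten)

  /-- `Q` applied pointwise to a list of terms. -/
  inductive QList {F V : Type} (C : Set F) : List (Tm F V) → List (List (Tm F V)) → Prop where
    | nil : QList C [] []
    | cons {t q ts qs} : QRel C t q → QList C ts qs → QList C (t :: ts) (q :: qs)
end

end Tm

namespace Tm
variable {F V : Type} {C : Set F} {prec : F → F → Prop}

theorem subst_app (σ : V → Tm F V) (f : F) (ns ss : List (Tm F V)) :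
    subst σ (Tm.app f ns ss) = Tm.app f (ns.map (subst σ)) (ss.map (subst σ)) := by
  rw [subst]; simp

theorem size_app (f : F) (ns ss : List (Tm F V)) :
    size (Tm.app f ns ss) = 1 + ((ns.map size).sum + (ss.map size).sum) := by
  rw [size]; simp

theorem size_pos (t : Tm F V) : 1 ≤ size t := by
  cases t with
  | var v => rw [size]
  | app f ns ss => rw [size_app]; omega

theorem length_le_size_sum (l : List (Tm F V)) : l.length ≤ (l.map size).sum := by
  induction l with
  | nil => simp
  | cons a as ih => simp only [List.map_cons, List.sum_cons, List.length_cons]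
                    have := size_pos a; omega

theorem size_lt_of_mem {f : F} {ns ss : List (Tm F V)} {u : Tm F V}
    (h : u ∈ ns ++ ss) : size u < size (Tm.app f ns ss) := by
  rw [size_app]
  rcases List.mem_append.mp h with h | h <;>
    have := List.single_le_sum (l := (_ : List (Tm F V)).map size)
      (fun x _ => Nat.zero_le x) (size u) (List.mem_map_of_mem (f := size) h) <;> omega

theorem isVal_subst {σ : V → Tm F V} (hσ : ∀ v, IsVal C (σ v))
    {t : Tm F V} (h : IsConTm C t) : IsVal C (subst σ t) := by
  induction h with
  | var v => rw [subst]; exact hσ v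
  | app hf _ ih =>
    rw [subst_app]
    exact IsVal.app hf (by
      intro x hx
      rcases List.mem_map.mp hx with ⟨u, hu, rfl⟩
      exact ih u hu)

theorem qrel_val {t : Tm F V} {q : List (Tm F V)} (hv : IsVal C t)
    (hq : QRel C t q) : q = [] := by
  cases hq with
  | val _ => rfl
  | app hnv _ => exact absurd hv hnv

theorem subeq_subst (σ : V → Tm F V) {u t : Tm F V} (h : SubEq u t) :
    SubEq (subst σ u) (subst σ t) := by
  induction h with
  | refl t => exact SubEq.refl _
  | nrm hmem _ ih => rw [subst_app]; exact SubEq.nrm (List.mem_map_of_mem hmem) ih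
  | saf hmem _ ih => rw [subst_app]; exact SubEq.saf (List.mem_map_of_mem hmem) ih

/-- Poe from a constructor term goes to a strict subterm (safe side). -/
theorem con_poe : ∀ n {u t : Tm F V}, size u ≤ n → Poe prec C u t → IsConTm C u →
    IsConTm C t ∧ ∃ f ss, u = Tm.app f [] ss ∧ ∃ w ∈ ss, SubEq w t := by
  intro n
  induction n with
  | zero => intro u t hs _ _; have := size_pos u; omega
  | succ n ih =>
    intro u t hs hpoe hcon
    cases hpoe with
    | sub hmem =>
      cases hcon with
      | app hf hargs =>
        simp only [List.nil_append] at hmem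
        exact ⟨hargs _ hmem, _, _, rfl, _, hmem, SubEq.refl _⟩
    | subtrans hmem hpoe' =>
      rename_i g gns gss w
      cases hcon with
      | app hf hargs =>
        simp only [List.nil_append] at hmem
        have hlt : size w < size (Tm.app g ([] : List (Tm F V)) gss) :=
          size_lt_of_mem (by simpa using hmem)
        obtain ⟨hct, f', ss', hu', w, hw, hsub⟩ :=
          ih (by omega) hpoe' (hargs _ hmem)
        refine ⟨hct, _, _, rfl, _, hmem, ?_⟩
        subst hu'
        exact SubEq.saf hw hsub
    | ia hf _ _ _ => cases hcon with | app hf' _ => exact absurd hf' hf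
    | tsc hf _ _ => cases hcon with | app hf' _ => exact absurd hf' hf

theorem con_poe' {u t : Tm F V} (hpoe : Poe prec C u t) (hcon : IsConTm C u) :
    IsConTm C t ∧ ∃ f ss, u = Tm.app f [] ss ∧ ∃ w ∈ ss, SubEq w t :=
  con_poe (size u) le_rfl hpoe hcon

theorem con_poe_ssub_subst (σ : V → Tm F V) {u t : Tm F V}
    (hpoe : Poe prec C u t) (hcon : IsConTm C u) :
    SSub (subst σ u) (subst σ t) := by
  obtain ⟨_, f, ss, rfl, w, hw, hsub⟩ := con_poe' hpoe hcon
  rw [subst_app]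
  exact SSub.saf (List.mem_map_of_mem hw) (subeq_subst σ hsub)

theorem poege_subst (σ : V → Tm F V) {as bs : List (Tm F V)}
    (h : PoeGE prec C as bs) (hcon : ∀ u ∈ as, IsConTm C u) :
    List.Forall₂ (fun a b => a = b ∨ SSub a b) (as.map (subst σ)) (bs.map (subst σ)) := by
  induction as generalizing bs with
  | nil => cases h; simp
  | cons a as ih =>
    cases h with
    | cons_eq h' =>
      exact List.Forall₂.cons (Or.inl rfl) (ih h' (fun u hu => hcon u (List.mem_cons_of_mem _ hu)))
    | cons_lt hab h' =>
      exact List.Forall₂.cons (Or.inr (con_poe_ssub_subst σ hab (hcon _ (List.mem_cons_self))))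
        (ih h' (fun u hu => hcon u (List.mem_cons_of_mem _ hu)))

theorem poeprod_subst (σ : V → Tm F V) {as bs : List (Tm F V)}
    (h : PoeProd prec C as bs) (hcon : ∀ u ∈ as, IsConTm C u) :
    List.Forall₂ (fun a b => a = b ∨ SSub a b) (as.map (subst σ)) (bs.map (subst σ)) ∧
    ∃ i, ∃ (h₁ : i < (as.map (subst σ)).length) (h₂ : i < (bs.map (subst σ)).length),
      SSub (as.map (subst σ))[i] (bs.map (subst σ))[i] := by
  induction as generalizing bs with
  | nil => cases h
  | cons a as ih =>
    cases h with
    | strict hab hge =>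
      have hssub := con_poe_ssub_subst σ hab (hcon _ (List.mem_cons_self))
      have hge' := poege_subst σ hge (fun u hu => hcon u (List.mem_cons_of_mem _ hu))
      have hlen := List.forall₂_iff_get.mp hge' |>.1
      refine ⟨List.Forall₂.cons (Or.inr hssub) hge', 0, ?_, ?_, hssub⟩ <;> simp
    | cons_eq h' =>
      obtain ⟨hfa, i, h₁, h₂, hs⟩ := ih h' (fun u hu => hcon u (List.mem_cons_of_mem _ hu))
      simp only [List.length_map] at h₁ h₂
      refine ⟨List.Forall₂.cons (Or.inl rfl) hfa, i + 1, ?_, ?_, ?_⟩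
      · simp only [List.map_cons, List.length_cons, List.length_map]; omega
      · simp only [List.map_cons, List.length_cons, List.length_map]; omega
      · simpa using hs
    | cons_lt hab h' =>
      obtain ⟨hfa, i, h₁, h₂, hs⟩ := ih h' (fun u hu => hcon u (List.mem_cons_of_mem _ hu))
      simp only [List.length_map] at h₁ h₂
      have hssub := con_poe_ssub_subst σ hab (hcon _ (List.mem_cons_self))
      refine ⟨List.Forall₂.cons (Or.inr hssub) hfa, i + 1, ?_, ?_, ?_⟩
      · simp only [List.map_cons, List.length_cons, List.length_map]; omega
      · simp only [List.map_cons, List.length_cons, List.length_map]; omega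
      · simpa using hs

theorem poel_mono {ℓ ℓ' : ℕ} (hl : ℓ ≤ ℓ') {a b : Tm F V}
    (h : Poel prec ℓ (Sum.inl a) (Sum.inl b)) : Poel prec ℓ' (Sum.inl a) (Sum.inl b) := by
  cases h with
  | ia hp hs hlen => exact Poel.ia hp hs (le_trans hlen hl)
  | tsc hfa hi => exact Poel.tsc hfa hi

theorem qlist_flatten_mem {σ : V → Tm F V} :
    ∀ (ts : List (Tm F V)) {qs : List (List (Tm F V))},
    QList C (ts.map (subst σ)) qs → ∀ x ∈ qs.flatten,
    ∃ t' ∈ ts, ∃ q', QRel C (subst σ t') q' ∧ x ∈ q' := by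
  intro ts
  induction ts with
  | nil => intro qs hq x hx; cases hq; simp at hx
  | cons t ts ih =>
    intro qs hq x hx
    cases hq with
    | cons hqr hql =>
      rw [List.flatten_cons, List.mem_append] at hx
      rcases hx with hx | hx
      · exact ⟨t, List.mem_cons_self, _, hqr, hx⟩
      · obtain ⟨t', ht', q', h1, h2⟩ := ih hql x hx
        exact ⟨t', List.mem_cons_of_mem _ ht', q', h1, h2⟩

theorem qlist_length {σ : V → Tm F V} (hσ : ∀ v, IsVal C (σ v)) :
    (∀ n (t : Tm F V) q, size t ≤ n → QRel C (subst σ t) q → q.length ≤ size t) := by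
  intro n
  induction n with
  | zero => intro t q hs _; have := size_pos t; omega
  | succ n ih =>
    intro t q hs hq
    cases t with
    | var v =>
      rw [subst] at hq
      rw [qrel_val (hσ v) hq]
      simp [size]
    | app f ns ss =>
      rw [subst_app] at hq
      cases hq with
      | val hv => simpa using size_pos (Tm.app f ns ss)
      | app hnv hql =>
        rename_i qs
        rw [size_app] at hs ⊢
        simp only [List.length_cons, List.length_flatten]
        have : ∀ (l : List (Tm F V)) qs', (l.map size).sum ≤ (ns.map size).sum + (ss.map size).sum
            → (∀ u ∈ l, u ∈ ss) → QList C (l.map (subst σ)) qs' →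
            (qs'.map List.length).sum ≤ (l.map size).sum := by
          intro l
          induction l with
          | nil => intro qs' _ _ h; cases h; simp
          | cons a as ih2 =>
            intro qs' hle hmem h
            cases h with
            | cons hqr hrest =>
              rename_i q' qs''
              simp only [List.map_cons, List.sum_cons] at hle ⊢
              have ha : size a ≤ n := by
                have := size_lt_of_mem (f := f) (List.mem_append_right ns (hmem a (List.mem_cons_self)))
                rw [size_app] at this
                have h0 : 0 ≤ (as.map size).sum := Nat.zero_le _
                omega
              have h1 := ih a q' ha hqr
              have h2 := ih2 qs'' (by omega) (fun u hu => hmem u (List.mem_cons_of_mem _ hu)) hrest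
              omega
        have := this ss qs (Nat.le_add_left _ _) (fun _ h => h) hql
        omega

theorem qlist_vals_flatten {vs : List (Tm F V)} {qs : List (List (Tm F V))}
    (hv : ∀ v ∈ vs, IsVal C v) (h : QList C vs qs) : qs.flatten = [] := by
  induction vs generalizing qs with
  | nil => cases h; rfl
  | cons a as ih =>
    cases h with
    | cons hqr hrest =>
      rw [List.flatten_cons, qrel_val (hv _ (List.mem_cons_self)) hqr, List.nil_append]
      exact ih (fun v hv' => hv v (List.mem_cons_of_mem _ hv')) hrest

end Tm
namespace Tm
variable {F V : Type} {C : Set F} {prec : F → F → Prop}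

theorem isVal_root {f : F} {ns ss : List (Tm F V)}
    (h : IsVal C (Tm.app f ns ss)) : f ∈ C := by
  cases h; assumption

theorem lemA {σ : V → Tm F V} (hσ : ∀ v, IsVal C (σ v)) {f : F} {ns ss : List (Tm F V)}
    (hcon : ∀ u ∈ ns ++ ss, IsConTm C u) :
    ∀ n (t : Tm F V) (q : List (Tm F V)), size t ≤ n →
      Poe prec C (Tm.app f ns ss) t → QRel C (subst σ t) q →
      ∀ x ∈ q, Poel prec (size t) (Sum.inl (Tm.app f (ns.map (subst σ)) [])) (Sum.inl x) := by
  intro n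
  induction n with
  | zero => intro t q hs _ _ x _; exact absurd (size_pos t) (by omega)
  | succ n ih =>
    intro t q hs hpoe hq x hx
    cases hpoe with
    | sub hmem =>
      rw [qrel_val (isVal_subst hσ (hcon _ hmem)) hq] at hx
      simp at hx
    | subtrans hmem hpoe' =>
      have hct := (con_poe' hpoe' (hcon _ hmem)).1
      rw [qrel_val (isVal_subst hσ hct) hq] at hx
      simp at hx
    | ia hf hpk hn hsafe =>
      rename_i g tn ts
      rw [subst_app] at hq
      cases hq with
      | val hv => simp at hx
      | app hnv hql =>
        rcases List.mem_cons.mp hx with rfl | hx'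
        · apply Poel.ia hpk
          · intro t' ht'
            rcases List.mem_map.mp ht' with ⟨u, hu, rfl⟩
            obtain ⟨f', ns', ss', heq, w, hw, hsub⟩ := hn u hu
            injection heq with h1 h2 h3
            subst h1; subst h2; subst h3
            exact SSub.nrm (List.mem_map_of_mem hw) (subeq_subst σ hsub)
          · rw [size_app]
            simp only [List.length_map]
            have h1 := length_le_size_sum tn
            omega
        · obtain ⟨t', ht', q', hq', hx''⟩ := qlist_flatten_mem ts hql x hx'
          have hlt : size t' < size (Tm.app g tn ts) :=
            size_lt_of_mem (List.mem_append_right _ ht')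
          exact poel_mono (le_of_lt hlt)
            (ih t' q' (by omega) (hsafe t' ht') hq' x hx'')
    | tsc hf hprod hsafe =>
      rename_i tn ts
      rw [subst_app] at hq
      cases hq with
      | val hv => simp at hx
      | app hnv hql =>
        rcases List.mem_cons.mp hx with rfl | hx'
        · obtain ⟨hfa, hex⟩ := poeprod_subst σ hprod
            (fun u hu => hcon u (List.mem_append_left _ hu))
          exact Poel.tsc hfa hex
        · obtain ⟨t', ht', q', hq', hx''⟩ := qlist_flatten_mem ts hql x hx'
          have hlt : size t' < size (Tm.app f tn ts) :=
            size_lt_of_mem (List.mem_append_right _ ht')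
          exact poel_mono (le_of_lt hlt)
            (ih t' q' (by omega) (hsafe t' ht') hq' x hx'')

end Tm
open Tm in
/-- Predicative embedding at the root: for a TRS `R` compatible with the POE*
order induced by `prec` and a substitution `σ` mapping variables to values,
every rule `l → r ∈ R` satisfies `Q(lσ) ▷_{|r|} Q(rσ)`. -/
theorem predicative_embedding_root {F V : Type} (C : Set F) (prec : F → F → Prop)
    (R : Set (Tm F V × Tm F V)) (hcompat : PoeCompatible prec C R)
    (σ : V → Tm F V) (hσ : ∀ v, IsVal C (σ v))
    {l r : Tm F V} (hrule : (l, r) ∈ R)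
    {ql qr : List (Tm F V)}
    (hql : QRel C (subst σ l) ql) (hqr : QRel C (subst σ r) qr) :
    Poel prec (size r) (Sum.inr ql) (Sum.inr qr) := by
  obtain ⟨hpoe, f, ns, ss, hl, hf, hcon⟩ := hcompat (l, r) hrule
  simp only at hl
  subst hl
  rw [subst_app] at hql
  cases hql with
  | val hv => exact absurd (isVal_root hv) hf
  | app hnv hql' =>
    rename_i qs
    have hflat : qs.flatten = [] := qlist_vals_flatten
      (fun v hv => by
        rcases List.mem_map.mp hv with ⟨u, hu, rfl⟩
        exact isVal_subst hσ (hcon u (List.mem_append_right _ hu))) hql'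
    rw [hflat]
    refine Poel.ms [Sum.inr qr] (by simp [toL]) ?_
    refine PoelProd.strict ?_ PoelGE.nil
    refine Poel.ialst ?_ ?_
    · intro x hx
      exact lemA hσ hcon (size r) r qr le_rfl hpoe hqr x hx
    · exact qlist_length hσ (size r) r qr le_rfl hqr
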